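/- Let (X,d) be a metric space with diam(X) ≤ D, where 0 < D < ∞, and fix x₀ ∈ X. Then for all x, y ∈ X the limit lim_{s→∞} exp(−(γ_x(s)|γ_y(s))_{(x₀,D)}) (Gromov products taken in Con(X)) exists and equals D·d(x,y)/((d(x,x₀)+D)·(d(y,x₀)+D)); in particular d(x,y)/(4D) ≤ lim_{s→∞} exp(−(γ_x(s)|γ_y(s))_{(x₀,D)}) ≤ d(x,y)/D, so d is bi-Lipschitz to the e-visual quasimetric on the boundary of Con(X). -/

import Mathlib

/-- The Bonk–Schramm cone distance on `X × (0,∞)`. -/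
noncomputable def dCon {X : Type*} [MetricSpace X] (p q : X × ℝ) : ℝ :=
  2 * Real.log ((dist p.1 q.1 + max p.2 q.2) / Real.sqrt (p.2 * q.2))

/-- The Gromov product `(p|p′)_q` in `Con(X)`, with respect to the metric `d_Con`. -/
noncomputable def gromovCon {X : Type*} [MetricSpace X] (p p' q : X × ℝ) : ℝ :=
  (dCon p q + dCon q p' - dCon p p') / 2

/-- Let `(X,d)` have diameter at most `D`, `0 < D < ∞`, and fix `x₀ ∈ X`. Then for all
`x, y ∈ X` the limit `lim_{s→∞} exp(−(γ_x(s)|γ_y(s))_{(x₀,D)})` exists and equals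
`D·d(x,y)/((d(x,x₀)+D)·(d(y,x₀)+D))`; in particular this value lies between
`d(x,y)/(4D)` and `d(x,y)/D`, so `d` is bi-Lipschitz to the `e`-visual quasimetric on the
boundary of `Con(X)`. -/
theorem stmt_5 {X : Type*} [MetricSpace X] (D : ℝ) (hD : 0 < D)
    (hdiam : ∀ x y : X, dist x y ≤ D) (x₀ x y : X) :
    Filter.Tendsto
        (fun s : ℝ =>
          Real.exp (-(gromovCon (x, Real.exp (-s)) (y, Real.exp (-s)) (x₀, D))))
        Filter.atTop
        (nhds (D * dist x y / ((dist x x₀ + D) * (dist y x₀ + D)))) ∧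
    dist x y / (4 * D) ≤ D * dist x y / ((dist x x₀ + D) * (dist y x₀ + D)) ∧
    D * dist x y / ((dist x x₀ + D) * (dist y x₀ + D)) ≤ dist x y / D := by
  have hA : (0:ℝ) < dist x x₀ + D := by positivity
  have hB : (0:ℝ) < dist y x₀ + D := by positivity
  refine ⟨?_, ?_, ?_⟩
  · -- limit
    have hlim : Filter.Tendsto
        (fun s : ℝ => D * (dist x y + Real.exp (-s)) / ((dist x x₀ + D) * (dist y x₀ + D)))
        Filter.atTop
        (nhds (D * dist x y / ((dist x x₀ + D) * (dist y x₀ + D)))) := by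
      have h0 : Filter.Tendsto (fun s : ℝ => Real.exp (-s)) Filter.atTop (nhds 0) := by
        simpa using Real.tendsto_exp_neg_atTop_nhds_zero
      have : Filter.Tendsto (fun s : ℝ => D * (dist x y + Real.exp (-s)) /
          ((dist x x₀ + D) * (dist y x₀ + D))) Filter.atTop
          (nhds (D * (dist x y + 0) / ((dist x x₀ + D) * (dist y x₀ + D)))) :=
        (((tendsto_const_nhds.add h0).const_mul D).div_const _)
      simpa using this
    refine hlim.congr' ?_
    have hev : ∀ᶠ s : ℝ in Filter.atTop, Real.exp (-s) ≤ D := by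
      have h0 : Filter.Tendsto (fun s : ℝ => Real.exp (-s)) Filter.atTop (nhds 0) := by
        simpa using Real.tendsto_exp_neg_atTop_nhds_zero
      exact h0.eventually_le_const hD
    filter_upwards [hev] with s hs
    set t := Real.exp (-s) with ht
    have htpos : 0 < t := Real.exp_pos _
    have hmax1 : max t D = D := max_eq_right hs
    have hmax2 : max D t = D := max_eq_left hs
    have hsq : Real.sqrt (t * t) = t := by
      rw [Real.sqrt_mul_self htpos.le]
    have hsqtD : Real.sqrt (t * D) * Real.sqrt (t * D) = t * D :=
      Real.mul_self_sqrt (by positivity)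
    have hsqtDpos : 0 < Real.sqrt (t * D) := Real.sqrt_pos.mpr (by positivity)
    have hC : (0:ℝ) < (dist x y + t) / t := by positivity
    have hApos : (0:ℝ) < (dist x x₀ + D) / Real.sqrt (t * D) := by positivity
    have hBpos : (0:ℝ) < (dist x₀ y + D) / Real.sqrt (D * t) := by positivity
    have hsqDt : Real.sqrt (D * t) = Real.sqrt (t * D) := by rw [mul_comm]
    simp only [gromovCon, dCon, hmax1, hmax2]
    have harith : ∀ a b c : ℝ,
        -((2 * a + 2 * b - 2 * c) / 2) = c - (a + b) := by intro a b c; ring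
    rw [harith, max_self, hsq, Real.exp_sub, Real.exp_add, Real.exp_log hC, Real.exp_log hApos,
      Real.exp_log hBpos]
    rw [hsqDt, dist_comm x₀ y]
    rw [div_mul_div_comm, hsqtD]
    field_simp
  · -- lower bound
    have h4 : (dist x x₀ + D) * (dist y x₀ + D) ≤ (4 * D) * D := by
      have h1 : dist x x₀ + D ≤ 2 * D := by linarith [hdiam x x₀]
      have h2 : dist y x₀ + D ≤ 2 * D := by linarith [hdiam y x₀]
      nlinarith
    rw [div_le_div_iff₀ (by positivity) (by positivity)]
    nlinarith [dist_nonneg (x := x) (y := y)]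
  · -- upper bound
    rw [div_le_div_iff₀ (by positivity) (by positivity)]
    have h1 : D ≤ dist x x₀ + D := by linarith [dist_nonneg (x := x) (y := x₀)]
    have h2 : D ≤ dist y x₀ + D := by linarith [dist_nonneg (x := y) (y := x₀)]
    nlinarith [mul_le_mul h1 h2 hD.le hA.le, dist_nonneg (x := x) (y := y),
      mul_le_mul_of_nonneg_left (mul_le_mul h1 h2 hD.le hA.le) (dist_nonneg (x := x) (y := y))]
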